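/- (Han–Zhang twisted 12-dimensional miraculous cancellation formula, eq. (0.6) with W = TX, at the level of Chern roots.) In the formal power series ring ℚ[[x₁, …, x₆, u]], the homogeneous component of total degree 6 of Π_{j=1}^{6} (2cosh(xⱼ/2)·A(xⱼ)) · cosh(u/2)^{-2} - cosh(u/2) · ( 8·Π_{j=1}^{6} A(xⱼ) · Σ_{j=1}^{6}(e^{xⱼ} + e^{-xⱼ}) - 32·Π_{j=1}^{6} A(xⱼ) - 24·Π_{j=1}^{6} A(xⱼ)·(e^{u} + e^{-u} - 2) ) equals 0. (This is the Chern-root form of {L̂(TX)/cosh²(c/2)}^{(12)} = {[8Â(TX)ch(T_ℂX) - 32Â(TX) - 24Â(TX)(e^c + e^{-c} - 2)]cosh(c/2)}^{(12)} on a 12-dimensional manifold X, where c is the Euler form of a rank-2 oriented bundle ξ.) -/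

import Mathlib

open MvPowerSeries

/-- Formal exponential of a multivariate power series (with zero constant term):
the coefficient of a monomial `m` in `exp S` is `Σ_k coeff m (S^k) / k!`. -/
noncomputable def mexp {σ : Type*} (S : MvPowerSeries σ ℚ) : MvPowerSeries σ ℚ :=
  fun m => ∑ k ∈ Finset.range ((m.sum fun _ e => e) + 1),
    ((k.factorial : ℚ))⁻¹ * MvPowerSeries.coeff m (S ^ k)

/-- Formal hyperbolic cosine: `cosh S = (exp S + exp (-S)) / 2`. -/
noncomputable def mcosh {σ : Type*} (S : MvPowerSeries σ ℚ) : MvPowerSeries σ ℚ :=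
  (2 : ℚ)⁻¹ • (mexp S + mexp (-S))

section Aux

set_option linter.unusedSectionVars false

variable {σ : Type*} [DecidableEq σ]


variable {σ : Type*} [DecidableEq σ]


lemma apply_le_wdeg (m : σ →₀ ℕ) (i : σ) : m i ≤ m.sum fun _ e => e := by
  by_cases h : i ∈ m.support
  · exact Finset.single_le_sum (fun j _ => Nat.zero_le _) h
  · simp [Finsupp.notMem_support_iff.mp h]

lemma coeff_mexp_smul_X (c : ℚ) (i : σ) (m : σ →₀ ℕ) :
    MvPowerSeries.coeff (R := ℚ) m (mexp (c • X i)) =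
      if m = Finsupp.single i (m i) then c ^ (m i) * ((m i).factorial : ℚ)⁻¹ else 0 := by
  have hco : ∀ k : ℕ, MvPowerSeries.coeff (R := ℚ) m ((c • X i : MvPowerSeries σ ℚ) ^ k)
      = c ^ k * (if m = Finsupp.single i k then 1 else 0) := by
    intro k
    rw [smul_pow, map_smul, coeff_X_pow]
    simp [smul_eq_mul]
  rw [coeff_apply, mexp]
  simp only [hco]
  by_cases h : m = Finsupp.single i (m i)
  · rw [if_pos h]
    have hiff : ∀ k : ℕ, (m = Finsupp.single i k) ↔ k = m i := by
      intro k
      constructor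
      · intro hk; rw [hk, Finsupp.single_eq_same]
      · rintro rfl; exact h
    calc ∑ k ∈ Finset.range ((m.sum fun _ e => e) + 1),
          ((k.factorial : ℚ))⁻¹ * (c ^ k * if m = Finsupp.single i k then 1 else 0)
        = ∑ k ∈ Finset.range ((m.sum fun _ e => e) + 1),
          (if k = m i then ((k.factorial : ℚ))⁻¹ * c ^ k else 0) := by
          apply Finset.sum_congr rfl
          intro k _
          by_cases hk : k = m i
          · rw [if_pos ((hiff k).mpr hk), if_pos hk]; ring
          · rw [if_neg (fun hh => hk ((hiff k).mp hh)), if_neg hk]; ring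
      _ = ((m i).factorial : ℚ)⁻¹ * c ^ (m i) := by
          rw [Finset.sum_ite_eq' _ (m i)]
          rw [if_pos]
          exact Finset.mem_range.mpr (Nat.lt_succ_of_le (apply_le_wdeg m i))
      _ = c ^ (m i) * ((m i).factorial : ℚ)⁻¹ := mul_comm _ _
  · rw [if_neg h]
    apply Finset.sum_eq_zero
    intro k _
    have : ¬ (m = Finsupp.single i k) := by
      intro hk
      exact h (by rw [hk, Finsupp.single_eq_same])
    rw [if_neg this]
    simp


/-- `S` involves only the variable `i`. -/
def OnVar (i : σ) (S : MvPowerSeries σ ℚ) : Prop :=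
  ∀ m : σ →₀ ℕ, m ≠ Finsupp.single i (m i) → MvPowerSeries.coeff (R := ℚ) m S = 0

lemma OnVar.add {i : σ} {S T : MvPowerSeries σ ℚ} (hS : OnVar i S) (hT : OnVar i T) :
    OnVar i (S + T) := fun m hm => by rw [map_add, hS m hm, hT m hm, add_zero]

lemma OnVar.smul {i : σ} {c : ℚ} {S : MvPowerSeries σ ℚ} (hS : OnVar i S) :
    OnVar i (c • S) := fun m hm => by rw [map_smul, hS m hm, smul_zero]

lemma OnVar.one {i : σ} : OnVar i (1 : MvPowerSeries σ ℚ) := by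
  intro m hm
  rw [coeff_one, if_neg]
  intro h0
  exact hm (by rw [h0]; simp)

lemma OnVar.mul {i : σ} {S T : MvPowerSeries σ ℚ} (hS : OnVar i S) (hT : OnVar i T) :
    OnVar i (S * T) := by
  intro m hm
  rw [coeff_mul]
  apply Finset.sum_eq_zero
  rintro ⟨p, q⟩ hpq
  rw [Finset.HasAntidiagonal.mem_antidiagonal] at hpq
  by_cases hp : p = Finsupp.single i (p i)
  · by_cases hq : q = Finsupp.single i (q i)
    · exfalso
      apply hm
      have : m = Finsupp.single i (p i + q i) := by
        rw [← hpq, Finsupp.single_add]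
        exact congrArg₂ (· + ·) hp hq
      rw [this, Finsupp.single_eq_same]
    · rw [hT q hq, mul_zero]
  · rw [hS p hp, zero_mul]

lemma OnVar.neg {i : σ} {S : MvPowerSeries σ ℚ} (hS : OnVar i S) : OnVar i (-S) :=
  fun m hm => by rw [map_neg, hS m hm, neg_zero]

lemma OnVar.sub {i : σ} {S T : MvPowerSeries σ ℚ} (hS : OnVar i S) (hT : OnVar i T) :
    OnVar i (S - T) := by rw [sub_eq_add_neg]; exact hS.add hT.neg

lemma OnVar.X {i : σ} : OnVar i (X i : MvPowerSeries σ ℚ) := by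
  intro m hm
  rw [MvPowerSeries.coeff_X, if_neg]
  intro h
  apply hm
  rw [h, Finsupp.single_eq_same]

lemma OnVar.C {i : σ} (c : ℚ) : OnVar i (MvPowerSeries.C (σ := σ) (R := ℚ) c) := by
  intro m hm
  rw [coeff_C, if_neg]
  intro h0
  exact hm (by rw [h0]; simp)

lemma OnVar.pow {i : σ} {S : MvPowerSeries σ ℚ} (hS : OnVar i S) (n : ℕ) : OnVar i (S ^ n) := by
  induction n with
  | zero => simpa using OnVar.one
  | succ n ih => rw [pow_succ]; exact ih.mul hS

lemma OnVar.two {i : σ} : OnVar i (2 : MvPowerSeries σ ℚ) := by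
  have : (2 : MvPowerSeries σ ℚ) = 1 + 1 := by norm_num
  rw [this]; exact OnVar.one.add OnVar.one

/-- coefficients of `S` vanish at monomials using variables outside `s`. -/
def VarsIn (s : Finset σ) (S : MvPowerSeries σ ℚ) : Prop :=
  ∀ m : σ →₀ ℕ, MvPowerSeries.coeff (R := ℚ) m S ≠ 0 → ∀ i, i ∉ s → m i = 0

lemma varsIn_prod (s : Finset σ) (f : σ → MvPowerSeries σ ℚ)
    (h : ∀ i ∈ s, OnVar i (f i)) : VarsIn s (∏ i ∈ s, f i) := by
  classical
  induction s using Finset.induction_on with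
  | empty =>
    intro m hm i _
    rw [Finset.prod_empty, coeff_one] at hm
    by_cases h0 : m = 0
    · rw [h0]; simp
    · exact absurd (if_neg h0) hm
  | @insert a s ha ih =>
    intro m hm i hi
    rw [Finset.prod_insert ha, coeff_mul] at hm
    obtain ⟨⟨p, q⟩, hpq, hne⟩ := Finset.exists_ne_zero_of_sum_ne_zero hm
    rw [Finset.HasAntidiagonal.mem_antidiagonal] at hpq
    have hp : p = Finsupp.single a (p a) := by
      by_contra hp
      exact hne (by rw [h a (Finset.mem_insert_self a s) p hp, zero_mul])
    have hq : ∀ j, j ∉ s → q j = 0 := by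
      intro j hj
      refine ih (fun k hk => h k (Finset.mem_insert_of_mem hk)) q ?_ j hj
      intro h0
      exact hne (by rw [h0, mul_zero])
    have hia : i ≠ a := fun h' => hi (h' ▸ Finset.mem_insert_self a s)
    have his : i ∉ s := fun h' => hi (Finset.mem_insert_of_mem h')
    have : m i = p i + q i := by rw [← hpq]; rfl
    rw [this, hq i his, hp]
    rw [Finsupp.single_apply, if_neg (fun h' => hia h'.symm)]

lemma coeff_prod_onVar (s : Finset σ) (f : σ → MvPowerSeries σ ℚ)
    (h : ∀ i ∈ s, OnVar i (f i)) (m : σ →₀ ℕ) (hm : ∀ i, i ∉ s → m i = 0) :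
    MvPowerSeries.coeff (R := ℚ) m (∏ i ∈ s, f i)
      = ∏ i ∈ s, MvPowerSeries.coeff (R := ℚ) (Finsupp.single i (m i)) (f i) := by
  classical
  induction s using Finset.induction_on generalizing m with
  | empty =>
    have h0 : m = 0 := by
      ext i; exact hm i (Finset.notMem_empty i)
    rw [h0, Finset.prod_empty, Finset.prod_empty, coeff_one, if_pos rfl]
  | @insert a s ha ih =>
    rw [Finset.prod_insert ha, coeff_mul]
    have hP : VarsIn s (∏ i ∈ s, f i) :=
      varsIn_prod s f (fun i hi => h i (Finset.mem_insert_of_mem hi))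
    have hmem : (Finsupp.single a (m a), m.erase a) ∈ Finset.HasAntidiagonal.antidiagonal m := by
      rw [Finset.HasAntidiagonal.mem_antidiagonal]
      exact Finsupp.single_add_erase a m
    rw [Finset.sum_eq_single_of_mem _ hmem]
    · have herase : ∀ i, i ∉ s → (m.erase a) i = 0 := by
        intro i hi
        by_cases hia : i = a
        · rw [hia, Finsupp.erase_same]
        · rw [Finsupp.erase_ne hia]
          exact hm i (by simp [hi, hia])
      rw [ih (fun i hi => h i (Finset.mem_insert_of_mem hi)) _ herase]
      rw [Finset.prod_insert ha]
      congr 1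
      apply Finset.prod_congr rfl
      intro i hi
      have hia : i ≠ a := fun h' => ha (h' ▸ hi)
      rw [Finsupp.erase_ne hia]
    · rintro ⟨p, q⟩ hpq hne
      rw [Finset.HasAntidiagonal.mem_antidiagonal] at hpq
      by_cases hp : p = Finsupp.single a (p a)
      · by_cases hqa : q a = 0
        · exfalso
          apply hne
          have hpa : p a = m a := by
            have : m a = p a + q a := by rw [← hpq]; rfl
            omega
          have hpeq : p = Finsupp.single a (m a) := by rw [hp, hpa]
          have hqeq : q = m.erase a := by
            have := Finsupp.single_add_erase a m
            have h2 : p + q = Finsupp.single a (m a) + m.erase a := by rw [hpq, this]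
            rw [hpeq] at h2
            exact add_left_cancel h2
          rw [Prod.mk.injEq]
          exact ⟨hpeq, hqeq⟩
        · have : MvPowerSeries.coeff (R := ℚ) q (∏ i ∈ s, f i) = 0 := by
            by_contra h0
            exact hqa (hP q h0 a ha)
          rw [this, mul_zero]
      · rw [h a (Finset.mem_insert_self a s) p hp, zero_mul]

/-- Cauchy product along a single variable. -/
lemma coeff_single_mul (i : σ) (S T : MvPowerSeries σ ℚ) (n : ℕ) :
    MvPowerSeries.coeff (R := ℚ) (Finsupp.single i n) (S * T)
      = ∑ k ∈ Finset.range (n + 1),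
          MvPowerSeries.coeff (R := ℚ) (Finsupp.single i k) S *
          MvPowerSeries.coeff (R := ℚ) (Finsupp.single i (n - k)) T := by
  rw [coeff_mul, Finsupp.antidiagonal_single, Finset.sum_map,
    Finset.Nat.sum_antidiagonal_eq_sum_range_succ_mk]
  simp


/-- agreement of coefficients in total degree ≤ 6 -/
def Eqv (S T : MvPowerSeries σ ℚ) : Prop :=
  ∀ m : σ →₀ ℕ, (m.sum fun _ e => e) ≤ 6 → MvPowerSeries.coeff (R := ℚ) m S = MvPowerSeries.coeff (R := ℚ) m T

lemma Eqv.refl (S : MvPowerSeries σ ℚ) : Eqv S S := fun _ _ => rfl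

lemma Eqv.symm {S T : MvPowerSeries σ ℚ} (h : Eqv S T) : Eqv T S := fun m hm => (h m hm).symm

lemma Eqv.trans {S T U : MvPowerSeries σ ℚ} (h : Eqv S T) (h' : Eqv T U) : Eqv S U :=
  fun m hm => (h m hm).trans (h' m hm)

lemma Eqv.of_eq {S T : MvPowerSeries σ ℚ} (h : S = T) : Eqv S T := h ▸ Eqv.refl S

lemma Eqv.add {S T S' T' : MvPowerSeries σ ℚ} (h : Eqv S S') (h' : Eqv T T') :
    Eqv (S + T) (S' + T') := fun m hm => by
  rw [map_add, map_add, h m hm, h' m hm]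

lemma Eqv.neg {S S' : MvPowerSeries σ ℚ} (h : Eqv S S') : Eqv (-S) (-S') := fun m hm => by
  rw [map_neg, map_neg, h m hm]

lemma Eqv.sub {S T S' T' : MvPowerSeries σ ℚ} (h : Eqv S S') (h' : Eqv T T') :
    Eqv (S - T) (S' - T') := by
  rw [sub_eq_add_neg, sub_eq_add_neg]; exact h.add h'.neg

lemma wdeg_add (p q : σ →₀ ℕ) :
    ((p + q).sum fun _ e => e) = (p.sum fun _ e => e) + (q.sum fun _ e => e) :=
  Finsupp.sum_add_index' (fun _ => rfl) (fun _ _ _ => rfl)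

lemma Eqv.mul {S T S' T' : MvPowerSeries σ ℚ} (h : Eqv S S') (h' : Eqv T T') :
    Eqv (S * T) (S' * T') := by
  intro m hm
  rw [coeff_mul, coeff_mul]
  apply Finset.sum_congr rfl
  rintro ⟨p, q⟩ hpq
  rw [Finset.HasAntidiagonal.mem_antidiagonal] at hpq
  have hw : (p.sum fun _ e => e) + (q.sum fun _ e => e) ≤ 6 := by
    rw [← wdeg_add, hpq]; exact hm
  rw [h p (by omega), h' q (by omega)]

lemma Eqv.pow {S S' : MvPowerSeries σ ℚ} (h : Eqv S S') (n : ℕ) : Eqv (S ^ n) (S' ^ n) := by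
  induction n with
  | zero => exact Eqv.refl _
  | succ n ih => rw [pow_succ, pow_succ]; exact ih.mul h

lemma Eqv.prod {ι : Type*} (s : Finset ι) (f g : ι → MvPowerSeries σ ℚ)
    (h : ∀ i ∈ s, Eqv (f i) (g i)) : Eqv (∏ i ∈ s, f i) (∏ i ∈ s, g i) := by
  classical
  induction s using Finset.induction_on with
  | empty => exact Eqv.refl _
  | @insert a s ha ih =>
    rw [Finset.prod_insert ha, Finset.prod_insert ha]
    exact (h a (Finset.mem_insert_self a s)).mul
      (ih (fun i hi => h i (Finset.mem_insert_of_mem hi)))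

lemma Eqv.sum {ι : Type*} (s : Finset ι) (f g : ι → MvPowerSeries σ ℚ)
    (h : ∀ i ∈ s, Eqv (f i) (g i)) : Eqv (∑ i ∈ s, f i) (∑ i ∈ s, g i) := by
  intro m hm
  rw [map_sum, map_sum]
  exact Finset.sum_congr rfl (fun i hi => h i hi m hm)


lemma coeff_mexp_neg_smul_X (c : ℚ) (i : σ) (m : σ →₀ ℕ) :
    MvPowerSeries.coeff (R := ℚ) m (mexp (-(c • X i))) =
      if m = Finsupp.single i (m i) then (-c) ^ (m i) * ((m i).factorial : ℚ)⁻¹ else 0 := by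
  rw [← neg_smul, coeff_mexp_smul_X]

lemma coeff_mexp_X (i : σ) (m : σ →₀ ℕ) :
    MvPowerSeries.coeff (R := ℚ) m (mexp (X i)) =
      if m = Finsupp.single i (m i) then (1 : ℚ) ^ (m i) * ((m i).factorial : ℚ)⁻¹ else 0 := by
  rw [← one_smul ℚ (X i : MvPowerSeries σ ℚ), coeff_mexp_smul_X]

lemma coeff_mexp_neg_X (i : σ) (m : σ →₀ ℕ) :
    MvPowerSeries.coeff (R := ℚ) m (mexp (-X i)) =
      if m = Finsupp.single i (m i) then (-1 : ℚ) ^ (m i) * ((m i).factorial : ℚ)⁻¹ else 0 := by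
  rw [show (-X i : MvPowerSeries σ ℚ) = -((1:ℚ) • X i) by rw [one_smul], coeff_mexp_neg_smul_X]

/-- coefficient function of `2sinh(x/2)` -/
noncomputable def sF (n : ℕ) : ℚ := ((2:ℚ)⁻¹ ^ n - (-(2:ℚ)⁻¹) ^ n) * ((n.factorial : ℚ))⁻¹

lemma coeff_Dser (i : σ) (m : σ →₀ ℕ) :
    MvPowerSeries.coeff (R := ℚ) m
        (mexp ((2:ℚ)⁻¹ • X i) - mexp (-((2:ℚ)⁻¹ • X i))) =
      if m = Finsupp.single i (m i) then sF (m i) else 0 := by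
  rw [map_sub, coeff_mexp_smul_X, coeff_mexp_neg_smul_X, sF]
  split_ifs <;> ring

/-- the series `D/x` -/
noncomputable def Eser (i : σ) : MvPowerSeries σ ℚ :=
  fun m => MvPowerSeries.coeff (R := ℚ) (m + Finsupp.single i 1)
    (mexp ((2:ℚ)⁻¹ • X i) - mexp (-((2:ℚ)⁻¹ • X i)))

lemma coeff_Eser (i : σ) (m : σ →₀ ℕ) :
    MvPowerSeries.coeff (R := ℚ) m (Eser i) =
      if m = Finsupp.single i (m i) then sF (m i + 1) else 0 := by
  have key := coeff_Dser i (m + Finsupp.single i 1)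
  have happ : ((m + Finsupp.single i 1 : σ →₀ ℕ)) i = m i + 1 := by
    rw [Finsupp.add_apply, Finsupp.single_eq_same]
  rw [happ] at key
  rw [coeff_apply, Eser, key]
  have hcond : (m + Finsupp.single i 1 = Finsupp.single i (m i + 1)) ↔
      (m = Finsupp.single i (m i)) := by
    rw [show (Finsupp.single i (m i + 1)) = Finsupp.single i (m i) + Finsupp.single i 1 by
      rw [← Finsupp.single_add]]
    exact add_left_injective _ |>.eq_iff
  by_cases h : m = Finsupp.single i (m i)
  · rw [if_pos (hcond.mpr h), if_pos h]
  · rw [if_neg (fun hh => h (hcond.mp hh)), if_neg h]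

lemma X_mul_Eser (i : σ) :
    (X i : MvPowerSeries σ ℚ) * Eser i
      = mexp ((2:ℚ)⁻¹ • X i) - mexp (-((2:ℚ)⁻¹ • X i)) := by
  ext m
  rw [show ((X i : MvPowerSeries σ ℚ) * Eser i) = monomial (R := ℚ) (Finsupp.single i 1) 1 * Eser i from rfl,
    coeff_monomial_mul]
  by_cases h : Finsupp.single i 1 ≤ m
  · rw [if_pos h, one_mul, coeff_apply, Eser, tsub_add_cancel_of_le h]
  · rw [if_neg h, coeff_Dser]
    have hmi : m i = 0 := by
      rw [Finsupp.single_le_iff] at h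
      omega
    by_cases h2 : m = Finsupp.single i (m i)
    · rw [if_pos h2, hmi, sF]
      norm_num
    · rw [if_neg h2]

lemma X_mul_cancel (i : σ) {P Q : MvPowerSeries σ ℚ}
    (h : (X i : MvPowerSeries σ ℚ) * P = X i * Q) : P = Q := by
  ext m
  have hX : (X i : MvPowerSeries σ ℚ) = monomial (R := ℚ) (Finsupp.single i 1) 1 := rfl
  have := congrArg (MvPowerSeries.coeff (R := ℚ) (Finsupp.single i 1 + m)) h
  rwa [hX, coeff_add_monomial_mul, coeff_add_monomial_mul, one_mul, one_mul] at this

lemma A_mul_Eser (i : σ) (Ai : MvPowerSeries σ ℚ)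
    (hAi : Ai * (mexp ((2:ℚ)⁻¹ • X i) - mexp (-((2:ℚ)⁻¹ • X i))) = X i) :
    Ai * Eser i = 1 := by
  apply X_mul_cancel i
  calc (X i : MvPowerSeries σ ℚ) * (Ai * Eser i)
      = Ai * ((X i : MvPowerSeries σ ℚ) * Eser i) := by ring
    _ = Ai * (mexp ((2:ℚ)⁻¹ • X i) - mexp (-((2:ℚ)⁻¹ • X i))) := by rw [X_mul_Eser]
    _ = X i := hAi
    _ = X i * 1 := (mul_one _).symm

/-- truncated Â-series -/
noncomputable def Ahat (i : σ) : MvPowerSeries σ ℚ :=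
  MvPowerSeries.C (σ := σ) (R := ℚ) 1 + MvPowerSeries.C (σ := σ) (R := ℚ) (-(1/24)) * X i ^ 2
    + MvPowerSeries.C (σ := σ) (R := ℚ) (7/5760) * X i ^ 4 + MvPowerSeries.C (σ := σ) (R := ℚ) (-(31/967680)) * X i ^ 6

def aF : ℕ → ℚ := fun n => if n = 0 then 1 else if n = 2 then -(1/24) else
  if n = 4 then 7/5760 else if n = 6 then -(31/967680) else 0

lemma coeff_single_C_mul_X_pow (i : σ) (c : ℚ) (k n : ℕ) :
    MvPowerSeries.coeff (R := ℚ) (Finsupp.single i n) (MvPowerSeries.C (σ := σ) (R := ℚ) c * X i ^ k)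
      = if n = k then c else 0 := by
  rw [coeff_C_mul, coeff_X_pow]
  by_cases h : n = k
  · rw [if_pos h, if_pos (by rw [h]), mul_one]
  · rw [if_neg h, if_neg (fun hh => h (by
      have := congrArg (fun f : σ →₀ ℕ => f i) hh
      simpa using this)), mul_zero]

lemma coeff_single_C (i : σ) (c : ℚ) (n : ℕ) :
    MvPowerSeries.coeff (R := ℚ) (Finsupp.single i n) (MvPowerSeries.C (σ := σ) (R := ℚ) c)
      = if n = 0 then c else 0 := by
  rw [coeff_C]
  by_cases h : n = 0
  · rw [if_pos h, if_pos (by rw [h]; simp)]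
  · rw [if_neg h, if_neg (fun hh => h (by rwa [Finsupp.single_eq_zero] at hh))]

lemma coeff_single_Ahat (i : σ) (n : ℕ) :
    MvPowerSeries.coeff (R := ℚ) (Finsupp.single i n) (Ahat i) = aF n := by
  rw [Ahat, map_add, map_add, map_add, coeff_single_C, coeff_single_C_mul_X_pow,
    coeff_single_C_mul_X_pow, coeff_single_C_mul_X_pow, aF]
  split_ifs <;> first | omega | norm_num

/-! ### OnVar instances -/

lemma OnVar.mexp_smul (c : ℚ) (i : σ) : OnVar i (mexp (c • MvPowerSeries.X i)) :=
  fun m hm => by rw [coeff_mexp_smul_X, if_neg hm]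

lemma OnVar.mexp_neg_smul (c : ℚ) (i : σ) : OnVar i (mexp (-(c • MvPowerSeries.X i))) :=
  fun m hm => by rw [coeff_mexp_neg_smul_X, if_neg hm]

lemma OnVar.mexp_X (i : σ) : OnVar i (mexp (MvPowerSeries.X i)) :=
  fun m hm => by rw [coeff_mexp_X, if_neg hm]

lemma OnVar.mexp_neg_X (i : σ) : OnVar i (mexp (-MvPowerSeries.X i)) :=
  fun m hm => by rw [coeff_mexp_neg_X, if_neg hm]

lemma OnVar.eser (i : σ) : OnVar i (Eser i) :=
  fun m hm => by rw [coeff_Eser, if_neg hm]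

lemma OnVar.ahat (i : σ) : OnVar i (Ahat i) := by
  refine (((OnVar.C 1).add ((OnVar.C _).mul (OnVar.X.pow 2))).add
    ((OnVar.C _).mul (OnVar.X.pow 4))).add ((OnVar.C _).mul (OnVar.X.pow 6))

lemma OnVar.mcosh_half (i : σ) : OnVar i (mcosh ((2:ℚ)⁻¹ • MvPowerSeries.X i)) := by
  rw [mcosh]
  exact ((OnVar.mexp_smul _ i).add (OnVar.mexp_neg_smul _ i)).smul

/-! ### single-variable coefficient evaluations -/

lemma coeff_single_mexp_smul (c : ℚ) (i : σ) (k : ℕ) :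
    MvPowerSeries.coeff (R := ℚ) (Finsupp.single i k) (mexp (c • X i))
      = c ^ k * ((k.factorial : ℚ))⁻¹ := by
  rw [coeff_mexp_smul_X]
  simp [Finsupp.single_eq_same]

lemma coeff_single_mexp_neg_smul (c : ℚ) (i : σ) (k : ℕ) :
    MvPowerSeries.coeff (R := ℚ) (Finsupp.single i k) (mexp (-(c • X i)))
      = (-c) ^ k * ((k.factorial : ℚ))⁻¹ := by
  rw [coeff_mexp_neg_smul_X]
  simp [Finsupp.single_eq_same]

lemma coeff_single_mexp_X (i : σ) (k : ℕ) :
    MvPowerSeries.coeff (R := ℚ) (Finsupp.single i k) (mexp (X i))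
      = (1:ℚ) ^ k * ((k.factorial : ℚ))⁻¹ := by
  rw [coeff_mexp_X]
  simp [Finsupp.single_eq_same]

lemma coeff_single_mexp_neg_X (i : σ) (k : ℕ) :
    MvPowerSeries.coeff (R := ℚ) (Finsupp.single i k) (mexp (-X i))
      = (-1:ℚ) ^ k * ((k.factorial : ℚ))⁻¹ := by
  rw [coeff_mexp_neg_X]
  simp [Finsupp.single_eq_same]

lemma coeff_single_Eser (i : σ) (k : ℕ) :
    MvPowerSeries.coeff (R := ℚ) (Finsupp.single i k) (Eser i) = sF (k + 1) := by
  rw [coeff_Eser]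
  simp [Finsupp.single_eq_same]

/-- coefficient function of `cosh(x/2)` -/
noncomputable def chG (n : ℕ) : ℚ :=
  (2:ℚ)⁻¹ * (((2:ℚ)⁻¹ ^ n + (-(2:ℚ)⁻¹) ^ n) * ((n.factorial : ℚ))⁻¹)

lemma coeff_mcosh_half (i : σ) (m : σ →₀ ℕ) :
    MvPowerSeries.coeff (R := ℚ) m (mcosh ((2:ℚ)⁻¹ • X i)) =
      if m = Finsupp.single i (m i) then chG (m i) else 0 := by
  rw [mcosh, map_smul, map_add, coeff_mexp_smul_X, coeff_mexp_neg_smul_X, chG]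
  split_ifs
  · rw [smul_eq_mul]; ring
  · rw [smul_eq_mul]; ring

lemma coeff_single_mcosh_half (i : σ) (k : ℕ) :
    MvPowerSeries.coeff (R := ℚ) (Finsupp.single i k) (mcosh ((2:ℚ)⁻¹ • X i)) = chG k := by
  rw [coeff_mcosh_half]
  simp [Finsupp.single_eq_same]

lemma coeff_single_two (i : σ) (k : ℕ) :
    MvPowerSeries.coeff (R := ℚ) (Finsupp.single i k) (2 : MvPowerSeries σ ℚ)
      = if k = 0 then 2 else 0 := by
  rw [show (2 : MvPowerSeries σ ℚ) = MvPowerSeries.C (σ := σ) (R := ℚ) 2 from (map_ofNat (MvPowerSeries.C (σ := σ) (R := ℚ)) 2).symm]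
  rw [coeff_single_C]

/-! ### Eqv identification of A with Ahat -/

lemma eqv_Eser_Ahat (i : σ) : Eqv (Eser i * Ahat i) 1 := by
  intro m hm
  by_cases h : m = Finsupp.single i (m i)
  · obtain ⟨n, rfl⟩ : ∃ n, m = Finsupp.single i n := ⟨m i, h⟩
    have hn : n ≤ 6 := by
      rw [Finsupp.sum_single_index (by rfl)] at hm
      exact hm
    rw [coeff_single_mul, coeff_one]
    have hcond : (Finsupp.single i n = 0) ↔ n = 0 := Finsupp.single_eq_zero
    simp only [coeff_single_Eser, coeff_single_Ahat]
    by_cases h0 : n = 0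
    · rw [if_pos (hcond.mpr h0)]
      subst h0
      norm_num [Finset.sum_range_succ, sF, aF, Nat.factorial]
    · rw [if_neg (fun hh => h0 (hcond.mp hh))]
      interval_cases n <;>
        first | omega | norm_num [Finset.sum_range_succ, sF, aF, Nat.factorial]
  · rw [((OnVar.eser i).mul (OnVar.ahat i)) m h, coeff_one, if_neg]
    intro h0
    exact h (by rw [h0]; simp)

lemma eqv_A_Ahat (i : σ) (Ai : MvPowerSeries σ ℚ)
    (hAi : Ai * (mexp ((2:ℚ)⁻¹ • X i) - mexp (-((2:ℚ)⁻¹ • X i))) = X i) :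
    Eqv Ai (Ahat i) := by
  have h1 : Ai * Eser i = 1 := A_mul_Eser i Ai hAi
  have h2 : Ai * (Eser i * Ahat i) = Ahat i := by rw [← mul_assoc, h1, one_mul]
  exact ((Eqv.of_eq (mul_one Ai).symm).trans
    ((Eqv.refl Ai).mul (eqv_Eser_Ahat i).symm)).trans (Eqv.of_eq h2)

/-! ### Eqv identification of (mcosh)⁻¹ with Chat -/

/-- truncated `sech(x/2)` series -/
noncomputable def Chat (i : σ) : MvPowerSeries σ ℚ :=
  MvPowerSeries.C (σ := σ) (R := ℚ) 1 + MvPowerSeries.C (σ := σ) (R := ℚ) (-(1/8)) * X i ^ 2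
    + MvPowerSeries.C (σ := σ) (R := ℚ) (5/384) * X i ^ 4 + MvPowerSeries.C (σ := σ) (R := ℚ) (-(61/46080)) * X i ^ 6

def ciF : ℕ → ℚ := fun n => if n = 0 then 1 else if n = 2 then -(1/8) else
  if n = 4 then 5/384 else if n = 6 then -(61/46080) else 0

lemma coeff_single_Chat (i : σ) (n : ℕ) :
    MvPowerSeries.coeff (R := ℚ) (Finsupp.single i n) (Chat i) = ciF n := by
  rw [Chat, map_add, map_add, map_add, coeff_single_C, coeff_single_C_mul_X_pow,
    coeff_single_C_mul_X_pow, coeff_single_C_mul_X_pow, ciF]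
  split_ifs <;> first | omega | norm_num

lemma OnVar.chat (i : σ) : OnVar i (Chat i) := by
  refine (((OnVar.C 1).add ((OnVar.C _).mul (OnVar.X.pow 2))).add
    ((OnVar.C _).mul (OnVar.X.pow 4))).add ((OnVar.C _).mul (OnVar.X.pow 6))

lemma constantCoeff_mcosh_half (i : σ) :
    MvPowerSeries.constantCoeff (σ := σ) (R := ℚ) (mcosh ((2:ℚ)⁻¹ • X i)) = 1 := by
  rw [← coeff_zero_eq_constantCoeff]
  have h0 : (0 : σ →₀ ℕ) = Finsupp.single i ((0 : σ →₀ ℕ) i) := by simp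
  rw [coeff_mcosh_half, if_pos h0]
  norm_num [chG, Nat.factorial]

lemma eqv_Chat_mcosh (i : σ) : Eqv (Chat i * mcosh ((2:ℚ)⁻¹ • X i)) 1 := by
  intro m hm
  by_cases h : m = Finsupp.single i (m i)
  · obtain ⟨n, rfl⟩ : ∃ n, m = Finsupp.single i n := ⟨m i, h⟩
    have hn : n ≤ 6 := by
      rw [Finsupp.sum_single_index (by rfl)] at hm
      exact hm
    rw [coeff_single_mul, coeff_one]
    have hcond : (Finsupp.single i n = 0) ↔ n = 0 := Finsupp.single_eq_zero
    simp only [coeff_single_Chat, coeff_single_mcosh_half]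
    by_cases h0 : n = 0
    · rw [if_pos (hcond.mpr h0)]
      subst h0
      norm_num [Finset.sum_range_succ, ciF, chG, Nat.factorial]
    · rw [if_neg (fun hh => h0 (hcond.mp hh))]
      interval_cases n <;>
        first | omega | norm_num [Finset.sum_range_succ, ciF, chG, Nat.factorial]
  · rw [((OnVar.chat i).mul (OnVar.mcosh_half i)) m h, coeff_one, if_neg]
    intro h0
    exact h (by rw [h0]; simp)

lemma eqv_inv_Chat (i : σ) : Eqv ((mcosh ((2:ℚ)⁻¹ • X i))⁻¹) (Chat i) := by
  have hCC : mcosh ((2:ℚ)⁻¹ • X i) * (mcosh ((2:ℚ)⁻¹ • X i))⁻¹ = 1 :=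
    MvPowerSeries.mul_inv_cancel _ (by rw [constantCoeff_mcosh_half]; exact one_ne_zero)
  have h2 : Chat i * mcosh ((2:ℚ)⁻¹ • X i) * (mcosh ((2:ℚ)⁻¹ • X i))⁻¹ = Chat i := by
    rw [mul_assoc, hCC, mul_one]
  exact ((Eqv.of_eq (one_mul _).symm).trans
    (((eqv_Chat_mcosh i).symm).mul (Eqv.refl _))).trans (Eqv.of_eq h2)

/-! ### coefficient functions of the seven per-variable factors -/

def gF : ℕ → ℚ := fun n => if n = 0 then 2 else if n = 2 then 1/6 else
  if n = 4 then -(1/360) else if n = 6 then 1/15120 else 0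
def bF : ℕ → ℚ := fun n => if n = 0 then 2 else if n = 2 then 11/12 else
  if n = 4 then 127/2880 else if n = 6 then 221/483840 else 0
def w1F : ℕ → ℚ := fun n => if n = 0 then 1 else if n = 2 then -(1/4) else
  if n = 4 then 1/24 else if n = 6 then -(17/2880) else 0
def chF : ℕ → ℚ := fun n => if n = 0 then 1 else if n = 2 then 1/8 else
  if n = 4 then 1/384 else if n = 6 then 1/46080 else 0
def w3F : ℕ → ℚ := fun n => if n = 0 then 0 else if n = 2 then 1 else
  if n = 4 then 5/24 else if n = 6 then 91/5760 else 0

lemma coeff_single_gfac (i : σ) (n : ℕ) (hn : n ≤ 6) :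
    MvPowerSeries.coeff (R := ℚ) (Finsupp.single i n)
        ((mexp ((2:ℚ)⁻¹ • X i) + mexp (-((2:ℚ)⁻¹ • X i))) * Ahat i) = gF n := by
  rw [coeff_single_mul]
  have hco : ∀ k : ℕ, MvPowerSeries.coeff (R := ℚ) (Finsupp.single i k)
      (mexp ((2:ℚ)⁻¹ • X i) + mexp (-((2:ℚ)⁻¹ • X i)))
      = ((2:ℚ)⁻¹ ^ k + (-(2:ℚ)⁻¹) ^ k) * ((k.factorial : ℚ))⁻¹ := by
    intro k
    rw [map_add, coeff_single_mexp_smul, coeff_single_mexp_neg_smul]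
    ring
  simp only [hco, coeff_single_Ahat]
  interval_cases n <;> norm_num [Finset.sum_range_succ, aF, gF, Nat.factorial]

lemma coeff_single_bfac (i : σ) (n : ℕ) (hn : n ≤ 6) :
    MvPowerSeries.coeff (R := ℚ) (Finsupp.single i n)
        (Ahat i * (mexp (X i) + mexp (-X i))) = bF n := by
  rw [coeff_single_mul]
  have hco : ∀ k : ℕ, MvPowerSeries.coeff (R := ℚ) (Finsupp.single i k)
      (mexp (X i) + mexp (-X i))
      = ((1:ℚ) ^ k + (-1:ℚ) ^ k) * ((k.factorial : ℚ))⁻¹ := by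
    intro k
    rw [map_add, coeff_single_mexp_X, coeff_single_mexp_neg_X]
    ring
  simp only [hco, coeff_single_Ahat]
  interval_cases n <;> norm_num [Finset.sum_range_succ, aF, bF, Nat.factorial]

lemma coeff_single_w1fac (i : σ) (n : ℕ) (hn : n ≤ 6) :
    MvPowerSeries.coeff (R := ℚ) (Finsupp.single i n) (Chat i * Chat i) = w1F n := by
  rw [coeff_single_mul]
  simp only [coeff_single_Chat]
  interval_cases n <;> norm_num [Finset.sum_range_succ, ciF, w1F]

lemma coeff_single_chfac (i : σ) (n : ℕ) (hn : n ≤ 6) :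
    MvPowerSeries.coeff (R := ℚ) (Finsupp.single i n) (mcosh ((2:ℚ)⁻¹ • X i)) = chF n := by
  rw [coeff_single_mcosh_half]
  interval_cases n <;> norm_num [chG, chF, Nat.factorial]

lemma coeff_single_w3fac (i : σ) (n : ℕ) (hn : n ≤ 6) :
    MvPowerSeries.coeff (R := ℚ) (Finsupp.single i n)
        (mcosh ((2:ℚ)⁻¹ • X i) * (mexp (X i) + mexp (-X i) - 2)) = w3F n := by
  rw [coeff_single_mul]
  have hco : ∀ k : ℕ, MvPowerSeries.coeff (R := ℚ) (Finsupp.single i k)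
      (mexp (X i) + mexp (-X i) - 2)
      = ((1:ℚ) ^ k + (-1:ℚ) ^ k) * ((k.factorial : ℚ))⁻¹ - (if k = 0 then 2 else 0) := by
    intro k
    rw [map_sub, map_add, coeff_single_mexp_X, coeff_single_mexp_neg_X, coeff_single_two]
    ring
  simp only [hco, coeff_single_mcosh_half]
  interval_cases n <;> norm_num [Finset.sum_range_succ, chG, w3F, Nat.factorial]

/-! ### the numerical identity -/

def aZ : ℕ → ℤ := fun h => if h = 0 then 967680 else if h = 1 then -40320 else if h = 2 then 1176 else if h = 3 then -31 else 0
def gZ : ℕ → ℤ := fun h => if h = 0 then 1935360 else if h = 1 then 161280 else if h = 2 then -2688 else if h = 3 then 64 else 0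
def bZ : ℕ → ℤ := fun h => if h = 0 then 1935360 else if h = 1 then 887040 else if h = 2 then 42672 else if h = 3 then 442 else 0
def w1Z : ℕ → ℤ := fun h => if h = 0 then 46080 else if h = 1 then -11520 else if h = 2 then 1920 else if h = 3 then -272 else 0
def chZ : ℕ → ℤ := fun h => if h = 0 then 46080 else if h = 1 then 5760 else if h = 2 then 120 else if h = 3 then 1 else 0
def w3Z : ℕ → ℤ := fun h => if h = 0 then 0 else if h = 1 then 46080 else if h = 2 then 9600 else if h = 3 then 728 else 0

set_option maxRecDepth 100000 in
theorem decCore : ∀ v0 v1 v2 v3 v4 v5 w : Fin 4,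
    (v0.1 + v1.1 + v2.1 + v3.1 + v4.1 + v5.1 + w.1 = 3) →
    (gZ v0.1 * gZ v1.1 * gZ v2.1 * gZ v3.1 * gZ v4.1 * gZ v5.1) * w1Z w.1
      - (8 * (bZ v0.1 * aZ v1.1 * aZ v2.1 * aZ v3.1 * aZ v4.1 * aZ v5.1
            + aZ v0.1 * bZ v1.1 * aZ v2.1 * aZ v3.1 * aZ v4.1 * aZ v5.1
            + aZ v0.1 * aZ v1.1 * bZ v2.1 * aZ v3.1 * aZ v4.1 * aZ v5.1
            + aZ v0.1 * aZ v1.1 * aZ v2.1 * bZ v3.1 * aZ v4.1 * aZ v5.1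
            + aZ v0.1 * aZ v1.1 * aZ v2.1 * aZ v3.1 * bZ v4.1 * aZ v5.1
            + aZ v0.1 * aZ v1.1 * aZ v2.1 * aZ v3.1 * aZ v4.1 * bZ v5.1) * chZ w.1
        - 32 * (aZ v0.1 * aZ v1.1 * aZ v2.1 * aZ v3.1 * aZ v4.1 * aZ v5.1) * chZ w.1
        - 24 * (aZ v0.1 * aZ v1.1 * aZ v2.1 * aZ v3.1 * aZ v4.1 * aZ v5.1) * w3Z w.1) = 0 := by
  decide

lemma aF_odd (n : ℕ) (h : n % 2 = 1) : aF n = 0 := by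
  unfold aF; split_ifs <;> first | rfl | (exfalso; omega)
lemma gF_odd (n : ℕ) (h : n % 2 = 1) : gF n = 0 := by
  unfold gF; split_ifs <;> first | rfl | (exfalso; omega)
lemma bF_odd (n : ℕ) (h : n % 2 = 1) : bF n = 0 := by
  unfold bF; split_ifs <;> first | rfl | (exfalso; omega)
lemma w1F_odd (n : ℕ) (h : n % 2 = 1) : w1F n = 0 := by
  unfold w1F; split_ifs <;> first | rfl | (exfalso; omega)
lemma chF_odd (n : ℕ) (h : n % 2 = 1) : chF n = 0 := by
  unfold chF; split_ifs <;> first | rfl | (exfalso; omega)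
lemma w3F_odd (n : ℕ) (h : n % 2 = 1) : w3F n = 0 := by
  unfold w3F; split_ifs <;> first | rfl | (exfalso; omega)

lemma aFZ {v : ℕ} (h : v ≤ 3) : aF (2*v) = (aZ v : ℚ) / 967680 := by
  interval_cases v <;> norm_num [aF, aZ]
lemma gFZ {v : ℕ} (h : v ≤ 3) : gF (2*v) = (gZ v : ℚ) / 967680 := by
  interval_cases v <;> norm_num [gF, gZ]
lemma bFZ {v : ℕ} (h : v ≤ 3) : bF (2*v) = (bZ v : ℚ) / 967680 := by
  interval_cases v <;> norm_num [bF, bZ]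
lemma w1FZ {v : ℕ} (h : v ≤ 3) : w1F (2*v) = (w1Z v : ℚ) / 46080 := by
  interval_cases v <;> norm_num [w1F, w1Z]
lemma chFZ {v : ℕ} (h : v ≤ 3) : chF (2*v) = (chZ v : ℚ) / 46080 := by
  interval_cases v <;> norm_num [chF, chZ]
lemma w3FZ {v : ℕ} (h : v ≤ 3) : w3F (2*v) = (w3Z v : ℚ) / 46080 := by
  interval_cases v <;> norm_num [w3F, w3Z]

lemma final_numeric (n0 n1 n2 n3 n4 n5 k : ℕ) (h : n0+n1+n2+n3+n4+n5+k = 6) :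
    (gF n0*gF n1*gF n2*gF n3*gF n4*gF n5) * w1F k
      - (8 * (bF n0*aF n1*aF n2*aF n3*aF n4*aF n5
            + aF n0*bF n1*aF n2*aF n3*aF n4*aF n5
            + aF n0*aF n1*bF n2*aF n3*aF n4*aF n5
            + aF n0*aF n1*aF n2*bF n3*aF n4*aF n5
            + aF n0*aF n1*aF n2*aF n3*bF n4*aF n5
            + aF n0*aF n1*aF n2*aF n3*aF n4*bF n5) * chF k
        - 32 * (aF n0*aF n1*aF n2*aF n3*aF n4*aF n5) * chF k
        - 24 * (aF n0*aF n1*aF n2*aF n3*aF n4*aF n5) * w3F k) = 0 := by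
  by_cases h0 : n0 % 2 = 1
  · rw [gF_odd n0 h0, aF_odd n0 h0, bF_odd n0 h0]; ring
  by_cases h1 : n1 % 2 = 1
  · rw [gF_odd n1 h1, aF_odd n1 h1, bF_odd n1 h1]; ring
  by_cases h2 : n2 % 2 = 1
  · rw [gF_odd n2 h2, aF_odd n2 h2, bF_odd n2 h2]; ring
  by_cases h3 : n3 % 2 = 1
  · rw [gF_odd n3 h3, aF_odd n3 h3, bF_odd n3 h3]; ring
  by_cases h4 : n4 % 2 = 1
  · rw [gF_odd n4 h4, aF_odd n4 h4, bF_odd n4 h4]; ring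
  by_cases h5 : n5 % 2 = 1
  · rw [gF_odd n5 h5, aF_odd n5 h5, bF_odd n5 h5]; ring
  by_cases hk : k % 2 = 1
  · rw [w1F_odd k hk, chF_odd k hk, w3F_odd k hk]; ring
  obtain ⟨v0, rfl⟩ : ∃ v, n0 = 2*v := ⟨n0/2, by omega⟩
  obtain ⟨v1, rfl⟩ : ∃ v, n1 = 2*v := ⟨n1/2, by omega⟩
  obtain ⟨v2, rfl⟩ : ∃ v, n2 = 2*v := ⟨n2/2, by omega⟩
  obtain ⟨v3, rfl⟩ : ∃ v, n3 = 2*v := ⟨n3/2, by omega⟩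
  obtain ⟨v4, rfl⟩ : ∃ v, n4 = 2*v := ⟨n4/2, by omega⟩
  obtain ⟨v5, rfl⟩ : ∃ v, n5 = 2*v := ⟨n5/2, by omega⟩
  obtain ⟨w, rfl⟩ : ∃ v, k = 2*v := ⟨k/2, by omega⟩
  have hv0 : v0 ≤ 3 := by omega
  have hv1 : v1 ≤ 3 := by omega
  have hv2 : v2 ≤ 3 := by omega
  have hv3 : v3 ≤ 3 := by omega
  have hv4 : v4 ≤ 3 := by omega
  have hv5 : v5 ≤ 3 := by omega
  have hw : w ≤ 3 := by omega
  have key : (gZ v0 * gZ v1 * gZ v2 * gZ v3 * gZ v4 * gZ v5) * w1Z w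
      - (8 * (bZ v0 * aZ v1 * aZ v2 * aZ v3 * aZ v4 * aZ v5
            + aZ v0 * bZ v1 * aZ v2 * aZ v3 * aZ v4 * aZ v5
            + aZ v0 * aZ v1 * bZ v2 * aZ v3 * aZ v4 * aZ v5
            + aZ v0 * aZ v1 * aZ v2 * bZ v3 * aZ v4 * aZ v5
            + aZ v0 * aZ v1 * aZ v2 * aZ v3 * bZ v4 * aZ v5
            + aZ v0 * aZ v1 * aZ v2 * aZ v3 * aZ v4 * bZ v5) * chZ w
        - 32 * (aZ v0 * aZ v1 * aZ v2 * aZ v3 * aZ v4 * aZ v5) * chZ w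
        - 24 * (aZ v0 * aZ v1 * aZ v2 * aZ v3 * aZ v4 * aZ v5) * w3Z w) = 0 :=
    decCore ⟨v0, by omega⟩ ⟨v1, by omega⟩ ⟨v2, by omega⟩ ⟨v3, by omega⟩
      ⟨v4, by omega⟩ ⟨v5, by omega⟩ ⟨w, by omega⟩ (show v0+v1+v2+v3+v4+v5+w = 3 by omega)
  have keyQ : ((gZ v0 * gZ v1 * gZ v2 * gZ v3 * gZ v4 * gZ v5) * w1Z w
      - (8 * (bZ v0 * aZ v1 * aZ v2 * aZ v3 * aZ v4 * aZ v5
            + aZ v0 * bZ v1 * aZ v2 * aZ v3 * aZ v4 * aZ v5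
            + aZ v0 * aZ v1 * bZ v2 * aZ v3 * aZ v4 * aZ v5
            + aZ v0 * aZ v1 * aZ v2 * bZ v3 * aZ v4 * aZ v5
            + aZ v0 * aZ v1 * aZ v2 * aZ v3 * bZ v4 * aZ v5
            + aZ v0 * aZ v1 * aZ v2 * aZ v3 * aZ v4 * bZ v5) * chZ w
        - 32 * (aZ v0 * aZ v1 * aZ v2 * aZ v3 * aZ v4 * aZ v5) * chZ w
        - 24 * (aZ v0 * aZ v1 * aZ v2 * aZ v3 * aZ v4 * aZ v5) * w3Z w) : ℚ) = 0 := by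
    exact_mod_cast congrArg (fun z : ℤ => (z : ℚ)) key
  rw [gFZ hv0, gFZ hv1, gFZ hv2, gFZ hv3, gFZ hv4, gFZ hv5,
    aFZ hv0, aFZ hv1, aFZ hv2, aFZ hv3, aFZ hv4, aFZ hv5,
    bFZ hv0, bFZ hv1, bFZ hv2, bFZ hv3, bFZ hv4, bFZ hv5,
    w1FZ hw, chFZ hw, w3FZ hw]
  linear_combination (norm := (push_cast; ring)) (1/((967680:ℚ)^6 * 46080)) * keyQ

/-! ### assembly helpers -/

lemma prod_elim6 {M : Type*} [CommMonoid M] (f : Fin 6 → M) (w : M) :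
    (∏ i : Fin 6 ⊕ Unit, Sum.elim f (fun _ => w) i) = (∏ j, f j) * w := by
  rw [Fintype.prod_sum_type]
  simp

lemma prod_ite_mul {M : Type*} [CommMonoid M] (g e : Fin 6 → M) (t : Fin 6) :
    (∏ j, if j = t then g j * e j else g j) = (∏ j, g j) * e t := by
  have hupd : ∀ j, (if j = t then g j * e j else g j) = Function.update g t (g t * e t) j := by
    intro j
    rw [Function.update_apply]
    split_ifs with h
    · rw [h]
    · rfl
  rw [Finset.prod_congr rfl (fun j _ => hupd j),
    Finset.prod_update_of_mem (Finset.mem_univ t),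
    ← Finset.mul_prod_erase Finset.univ g (Finset.mem_univ t),
    Finset.sdiff_singleton_eq_erase]
  exact mul_right_comm (g t) (e t) _

lemma coeff_prod_split (F : Fin 6 ⊕ Unit → MvPowerSeries (Fin 6 ⊕ Unit) ℚ)
    (hOV : ∀ i, OnVar i (F i)) (m : (Fin 6 ⊕ Unit) →₀ ℕ) :
    MvPowerSeries.coeff (R := ℚ) m (∏ i, F i)
      = (∏ j : Fin 6, MvPowerSeries.coeff (R := ℚ)
          (Finsupp.single (Sum.inl j) (m (Sum.inl j))) (F (Sum.inl j)))
        * MvPowerSeries.coeff (R := ℚ)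
          (Finsupp.single (Sum.inr ()) (m (Sum.inr ()))) (F (Sum.inr ())) := by
  rw [coeff_prod_onVar Finset.univ F (fun i _ => hOV i) m
    (fun i hi => absurd (Finset.mem_univ i) hi), Fintype.prod_sum_type]
  simp

lemma wdeg_split (m : (Fin 6 ⊕ Unit) →₀ ℕ) :
    (m.sum fun _ e => e) = (∑ j : Fin 6, m (Sum.inl j)) + m (Sum.inr ()) := by
  rw [Finsupp.sum_fintype _ _ (fun i => rfl), Fintype.sum_sum_type]
  simp

lemma final_numeric' (n : Fin 6 → ℕ) (k : ℕ) (h : (∑ j, n j) + k = 6) :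
    (∏ j, gF (n j)) * w1F k
      - (8 * (∑ t, (∏ j, if j = t then bF (n j) else aF (n j)) * chF k)
        - 32 * ((∏ j, aF (n j)) * chF k)
        - 24 * ((∏ j, aF (n j)) * w3F k)) = 0 := by
  simp only [Fin.sum_univ_six] at h
  simp only [Fin.sum_univ_six, Fin.prod_univ_six]
  simp (config := { decide := true }) only [if_true, if_false]
  linear_combination final_numeric (n 0) (n 1) (n 2) (n 3) (n 4) (n 5) k (by omega)

/-! ### the four product families -/

noncomputable def Fam1 : Fin 6 ⊕ Unit → MvPowerSeries (Fin 6 ⊕ Unit) ℚ :=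
  Sum.elim (fun j => (mexp ((2 : ℚ)⁻¹ • X (Sum.inl j)) + mexp (-((2 : ℚ)⁻¹ • X (Sum.inl j))))
      * Ahat (Sum.inl j))
    (fun _ => Chat (Sum.inr ()) * Chat (Sum.inr ()))

noncomputable def Fam2 (t : Fin 6) : Fin 6 ⊕ Unit → MvPowerSeries (Fin 6 ⊕ Unit) ℚ :=
  Sum.elim (fun j => if j = t then
      Ahat (Sum.inl j) * (mexp (X (Sum.inl j)) + mexp (-X (Sum.inl j))) else Ahat (Sum.inl j))
    (fun _ => mcosh ((2:ℚ)⁻¹ • X (Sum.inr ())))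

noncomputable def Fam3 : Fin 6 ⊕ Unit → MvPowerSeries (Fin 6 ⊕ Unit) ℚ :=
  Sum.elim (fun j => Ahat (Sum.inl j)) (fun _ => mcosh ((2:ℚ)⁻¹ • X (Sum.inr ())))

noncomputable def Fam4 : Fin 6 ⊕ Unit → MvPowerSeries (Fin 6 ⊕ Unit) ℚ :=
  Sum.elim (fun j => Ahat (Sum.inl j))
    (fun _ => mcosh ((2:ℚ)⁻¹ • X (Sum.inr ())) *
      (mexp (X (Sum.inr ())) + mexp (-X (Sum.inr ())) - 2))

lemma onVar_Fam1 : ∀ i, OnVar i (Fam1 i) := by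
  rintro (j | ⟨⟩)
  · exact ((OnVar.mexp_smul _ _).add (OnVar.mexp_neg_smul _ _)).mul (OnVar.ahat _)
  · exact (OnVar.chat _).mul (OnVar.chat _)

lemma onVar_Fam2 (t : Fin 6) : ∀ i, OnVar i (Fam2 t i) := by
  rintro (j | ⟨⟩)
  · show OnVar _ (if j = t then _ else _)
    split_ifs
    · exact (OnVar.ahat _).mul ((OnVar.mexp_X _).add (OnVar.mexp_neg_X _))
    · exact OnVar.ahat _
  · exact OnVar.mcosh_half _

lemma onVar_Fam3 : ∀ i, OnVar i (Fam3 i) := by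
  rintro (j | ⟨⟩)
  · exact OnVar.ahat _
  · exact OnVar.mcosh_half _

lemma onVar_Fam4 : ∀ i, OnVar i (Fam4 i) := by
  rintro (j | ⟨⟩)
  · exact OnVar.ahat _
  · exact (OnVar.mcosh_half _).mul
      (((OnVar.mexp_X _).add (OnVar.mexp_neg_X _)).sub OnVar.two)

lemma coeff_Fam1 (m : (Fin 6 ⊕ Unit) →₀ ℕ) (hb : ∀ i, m i ≤ 6) :
    MvPowerSeries.coeff (R := ℚ) m (∏ i, Fam1 i)
      = (∏ j : Fin 6, gF (m (Sum.inl j))) * w1F (m (Sum.inr ())) := by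
  rw [coeff_prod_split Fam1 onVar_Fam1 m]
  simp only [Fam1, Sum.elim_inl, Sum.elim_inr]
  rw [coeff_single_w1fac _ _ (hb _)]
  congr 1
  exact Finset.prod_congr rfl (fun j _ => coeff_single_gfac _ _ (hb _))

lemma coeff_Fam2 (t : Fin 6) (m : (Fin 6 ⊕ Unit) →₀ ℕ) (hb : ∀ i, m i ≤ 6) :
    MvPowerSeries.coeff (R := ℚ) m (∏ i, Fam2 t i)
      = (∏ j : Fin 6, if j = t then bF (m (Sum.inl j)) else aF (m (Sum.inl j)))
          * chF (m (Sum.inr ())) := by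
  rw [coeff_prod_split (Fam2 t) (onVar_Fam2 t) m]
  simp only [Fam2, Sum.elim_inl, Sum.elim_inr]
  rw [coeff_single_chfac _ _ (hb _)]
  congr 1
  refine Finset.prod_congr rfl (fun j _ => ?_)
  split_ifs
  · exact coeff_single_bfac _ _ (hb _)
  · exact coeff_single_Ahat _ _

lemma coeff_Fam3 (m : (Fin 6 ⊕ Unit) →₀ ℕ) (hb : ∀ i, m i ≤ 6) :
    MvPowerSeries.coeff (R := ℚ) m (∏ i, Fam3 i)
      = (∏ j : Fin 6, aF (m (Sum.inl j))) * chF (m (Sum.inr ())) := by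
  rw [coeff_prod_split Fam3 onVar_Fam3 m]
  simp only [Fam3, Sum.elim_inl, Sum.elim_inr]
  rw [coeff_single_chfac _ _ (hb _)]
  congr 1
  exact Finset.prod_congr rfl (fun j _ => coeff_single_Ahat _ _)

lemma coeff_Fam4 (m : (Fin 6 ⊕ Unit) →₀ ℕ) (hb : ∀ i, m i ≤ 6) :
    MvPowerSeries.coeff (R := ℚ) m (∏ i, Fam4 i)
      = (∏ j : Fin 6, aF (m (Sum.inl j))) * w3F (m (Sum.inr ())) := by
  rw [coeff_prod_split Fam4 onVar_Fam4 m]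
  simp only [Fam4, Sum.elim_inl, Sum.elim_inr]
  rw [coeff_single_w3fac _ _ (hb _)]
  congr 1
  exact Finset.prod_congr rfl (fun j _ => coeff_single_Ahat _ _)


end Aux

/-- The Han–Zhang twisted 12-dimensional miraculous cancellation formula (eq. (0.6) with
`W = TX`): `{L̂(TX)/cosh²(c/2)}^{(12)} =
  {[8Â(TX)ch(T_ℂX) - 32Â(TX) - 24Â(TX)(e^c+e^{-c}-2)] cosh(c/2)}^{(12)}`,
at the level of Chern roots `±xⱼ` of `T_ℂX` (`dim X = 12`), with `u` the Euler form of the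
rank-2 bundle `ξ`. `A j` is the Â-series of `xⱼ`, and `(mcosh ((2:ℚ)⁻¹ • u))⁻¹` is the
multiplicative inverse of the unit power series `cosh(u/2)`. -/
theorem twisted_miraculous_cancellation_dim12
    (A : Fin 6 → MvPowerSeries (Fin 6 ⊕ Unit) ℚ)
    (hA : ∀ j, A j * (mexp ((2 : ℚ)⁻¹ • X (Sum.inl j)) -
        mexp (-((2 : ℚ)⁻¹ • X (Sum.inl j)))) = X (Sum.inl j))
    (m : (Fin 6 ⊕ Unit) →₀ ℕ) (hm : (m.sum fun _ e => e) = 6) :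
    MvPowerSeries.coeff m
      ((∏ j, (mexp ((2 : ℚ)⁻¹ • X (Sum.inl j)) + mexp (-((2 : ℚ)⁻¹ • X (Sum.inl j)))) * A j) *
          ((mcosh ((2 : ℚ)⁻¹ • X (Sum.inr ())))⁻¹) ^ 2
        - mcosh ((2 : ℚ)⁻¹ • X (Sum.inr ())) *
          (8 * (∏ j, A j) * (∑ j, (mexp (X (Sum.inl j)) + mexp (-X (Sum.inl j))))
            - 32 * (∏ j, A j)
            - 24 * (∏ j, A j) *
              (mexp (X (Sum.inr ())) + mexp (-X (Sum.inr ())) - 2)))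
    = 0 := by

  classical
  have hm6 : (m.sum fun _ e => e) ≤ 6 := le_of_eq hm
  have hb : ∀ i : Fin 6 ⊕ Unit, m i ≤ 6 := fun i => by
    have := apply_le_wdeg m i
    omega
  have hAh : ∀ j : Fin 6, Eqv (A j) (Ahat (Sum.inl j : Fin 6 ⊕ Unit)) :=
    fun j => eqv_A_Ahat (Sum.inl j) (A j) (hA j)
  have hprodA : Eqv (∏ j, A j) (∏ j : Fin 6, Ahat (Sum.inl j : Fin 6 ⊕ Unit)) :=
    Eqv.prod _ _ _ (fun j _ => hAh j)
  have hinv2 : Eqv ((mcosh ((2:ℚ)⁻¹ • X (Sum.inr () : Fin 6 ⊕ Unit)))⁻¹ ^ 2)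
      (Chat (Sum.inr ()) * Chat (Sum.inr ())) := by
    rw [pow_two]
    exact (eqv_inv_Chat _).mul (eqv_inv_Chat _)
  have hbig : Eqv
      ((∏ j, (mexp ((2 : ℚ)⁻¹ • X (Sum.inl j)) + mexp (-((2 : ℚ)⁻¹ • X (Sum.inl j)))) * A j) *
          ((mcosh ((2 : ℚ)⁻¹ • X (Sum.inr ())))⁻¹) ^ 2
        - mcosh ((2 : ℚ)⁻¹ • X (Sum.inr ())) *
          (8 * (∏ j, A j) * (∑ j, (mexp (X (Sum.inl j)) + mexp (-X (Sum.inl j))))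
            - 32 * (∏ j, A j)
            - 24 * (∏ j, A j) *
              (mexp (X (Sum.inr ())) + mexp (-X (Sum.inr ())) - 2)))
      ((∏ j, (mexp ((2 : ℚ)⁻¹ • X (Sum.inl j)) + mexp (-((2 : ℚ)⁻¹ • X (Sum.inl j)))) *
            Ahat (Sum.inl j)) * (Chat (Sum.inr ()) * Chat (Sum.inr ()))
        - mcosh ((2 : ℚ)⁻¹ • X (Sum.inr ())) *
          (8 * (∏ j : Fin 6, Ahat (Sum.inl j : Fin 6 ⊕ Unit)) *
              (∑ j, (mexp (X (Sum.inl j)) + mexp (-X (Sum.inl j))))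
            - 32 * (∏ j : Fin 6, Ahat (Sum.inl j : Fin 6 ⊕ Unit))
            - 24 * (∏ j : Fin 6, Ahat (Sum.inl j : Fin 6 ⊕ Unit)) *
              (mexp (X (Sum.inr ())) + mexp (-X (Sum.inr ())) - 2))) :=
    Eqv.sub
      ((Eqv.prod _ _ _ (fun j _ => (Eqv.refl _).mul (hAh j))).mul hinv2)
      ((Eqv.refl _).mul
        (((((Eqv.refl 8).mul hprodA).mul (Eqv.refl _)).sub ((Eqv.refl 32).mul hprodA)).sub
          (((Eqv.refl 24).mul hprodA).mul (Eqv.refl _))))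
  rw [hbig m hm6]
  have e1 : (∏ j, (mexp ((2 : ℚ)⁻¹ • X (Sum.inl j)) + mexp (-((2 : ℚ)⁻¹ • X (Sum.inl j)))) *
        Ahat (Sum.inl j)) * (Chat (Sum.inr ()) * Chat (Sum.inr ()))
      = ∏ i, Fam1 i := (prod_elim6 _ _).symm
  have e2 : ∀ t : Fin 6, (∏ i, Fam2 t i)
      = ((∏ j : Fin 6, Ahat (Sum.inl j : Fin 6 ⊕ Unit)) *
          mcosh ((2:ℚ)⁻¹ • X (Sum.inr () : Fin 6 ⊕ Unit))) *
        (mexp (X (Sum.inl t)) + mexp (-X (Sum.inl t))) := by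
    intro t
    rw [show (∏ i, Fam2 t i) = (∏ j : Fin 6, if j = t then
        Ahat (Sum.inl j : Fin 6 ⊕ Unit) * (mexp (X (Sum.inl j)) + mexp (-X (Sum.inl j)))
        else Ahat (Sum.inl j)) * mcosh ((2:ℚ)⁻¹ • X (Sum.inr () : Fin 6 ⊕ Unit))
      from prod_elim6 _ _]
    rw [prod_ite_mul]
    ring
  have e3 : (∏ i, Fam3 i) = (∏ j : Fin 6, Ahat (Sum.inl j : Fin 6 ⊕ Unit)) *
      mcosh ((2:ℚ)⁻¹ • X (Sum.inr () : Fin 6 ⊕ Unit)) := prod_elim6 _ _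
  have e4 : (∏ i, Fam4 i) = (∏ j : Fin 6, Ahat (Sum.inl j : Fin 6 ⊕ Unit)) *
      (mcosh ((2:ℚ)⁻¹ • X (Sum.inr () : Fin 6 ⊕ Unit)) *
        (mexp (X (Sum.inr ())) + mexp (-X (Sum.inr ())) - 2)) := prod_elim6 _ _
  have decomp : (∏ j, (mexp ((2 : ℚ)⁻¹ • X (Sum.inl j)) + mexp (-((2 : ℚ)⁻¹ • X (Sum.inl j)))) *
            Ahat (Sum.inl j)) * (Chat (Sum.inr ()) * Chat (Sum.inr ()))
        - mcosh ((2 : ℚ)⁻¹ • X (Sum.inr ())) *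
          (8 * (∏ j : Fin 6, Ahat (Sum.inl j : Fin 6 ⊕ Unit)) *
              (∑ j, (mexp (X (Sum.inl j)) + mexp (-X (Sum.inl j))))
            - 32 * (∏ j : Fin 6, Ahat (Sum.inl j : Fin 6 ⊕ Unit))
            - 24 * (∏ j : Fin 6, Ahat (Sum.inl j : Fin 6 ⊕ Unit)) *
              (mexp (X (Sum.inr ())) + mexp (-X (Sum.inr ())) - 2))
      = (∏ i, Fam1 i) - (8 * (∑ t, ∏ i, Fam2 t i) - 32 * (∏ i, Fam3 i)
          - 24 * (∏ i, Fam4 i)) := by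
    rw [← e1, e3, e4]
    rw [Finset.sum_congr rfl (fun t _ => e2 t), ← Finset.mul_sum]
    ring
  rw [decomp]
  rw [map_sub, map_sub, map_sub]
  rw [show (8 : MvPowerSeries (Fin 6 ⊕ Unit) ℚ) = MvPowerSeries.C (σ := _) (R := ℚ) 8
      from (map_ofNat _ 8).symm,
    show (32 : MvPowerSeries (Fin 6 ⊕ Unit) ℚ) = MvPowerSeries.C (σ := _) (R := ℚ) 32
      from (map_ofNat _ 32).symm,
    show (24 : MvPowerSeries (Fin 6 ⊕ Unit) ℚ) = MvPowerSeries.C (σ := _) (R := ℚ) 24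
      from (map_ofNat _ 24).symm,
    coeff_C_mul, coeff_C_mul, coeff_C_mul, map_sum]
  rw [coeff_Fam1 m hb, coeff_Fam3 m hb, coeff_Fam4 m hb]
  rw [Finset.sum_congr rfl (fun t _ => coeff_Fam2 t m hb)]
  have hsum : (∑ j : Fin 6, m (Sum.inl j)) + m (Sum.inr ()) = 6 := by
    rw [← wdeg_split]; exact hm
  have := final_numeric' (fun j => m (Sum.inl j)) (m (Sum.inr ())) hsum
  linarith [this]
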